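/- arXiv:2601.05586 — 2 statements merged into one kernel-verified Lean document; each statement's English description precedes it below -/
import Mathlib

section
/- Let P be a Poisson point process on (D, 𝒟) with s-finite intensity measure λ. Then for every measurable function u : D → [0, ∞), the Laplace functional satisfies E[exp(−∫ u dP)] = exp(−∫_D (1 − e^{−u(x)}) λ(dx)). -/
open MeasureTheory ProbabilityTheory ENNReal

/-- A point process `P` (random counting measure) on `D` is a Poisson point process with
intensity measure `lam`: counts are `ℕ∞`-valued, Poisson distributed with the correct mean
(a.s. infinite when the intensity mass is infinite), and independent over disjoint sets. -/
def IsPoissonPP {Ω D : Type*} [MeasurableSpace Ω] [MeasurableSpace D]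
    (Pr : Measure Ω) (P : Ω → Measure D) (lam : Measure D) : Prop :=
  Measurable P ∧
  (∀ ω, ∀ B : Set D, MeasurableSet B → P ω B = ⊤ ∨ ∃ n : ℕ, P ω B = n) ∧
  (∀ B : Set D, MeasurableSet B → lam B ≠ ⊤ →
      Measure.map (fun ω => P ω B) Pr =
        Measure.map (fun n : ℕ => (n : ℝ≥0∞)) ((poissonPMF (lam B).toNNReal).toMeasure)) ∧
  (∀ B : Set D, MeasurableSet B → lam B = ⊤ → ∀ᵐ ω ∂Pr, P ω B = ⊤) ∧
  (∀ (m : ℕ) (B : Fin m → Set D), (∀ i, MeasurableSet (B i)) →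
      Pairwise (Function.onFun Disjoint B) →
      iIndepFun (fun i ω => P ω (B i)) Pr)

/-- `expNeg t = e^{-t}` for `t : ℝ≥0∞`, with `expNeg ⊤ = 0`. -/
noncomputable def expNeg (t : ℝ≥0∞) : ℝ≥0∞ :=
  if t = ⊤ then 0 else ENNReal.ofReal (Real.exp (-t.toReal))

lemma expNeg_top : expNeg ⊤ = 0 := by simp [expNeg]

lemma expNeg_zero : expNeg 0 = 1 := by simp [expNeg]

lemma expNeg_ne_top {t : ℝ≥0∞} : expNeg t ≠ ⊤ := by
  unfold expNeg; split <;> simp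

lemma expNeg_le_one {t : ℝ≥0∞} : expNeg t ≤ 1 := by
  unfold expNeg
  split
  · exact zero_le_one
  · rw [← ENNReal.ofReal_one]
    exact ENNReal.ofReal_le_ofReal
      (Real.exp_le_one_iff.2 (neg_nonpos.2 ENNReal.toReal_nonneg))

lemma expNeg_lt_one {t : ℝ≥0∞} (ht : t ≠ 0) : expNeg t < 1 := by
  rcases eq_or_ne t ⊤ with rfl | htop
  · simp [expNeg_top]
  · have h0 : 0 < t.toReal := ENNReal.toReal_pos ht htop
    rw [expNeg, if_neg htop, ← ENNReal.ofReal_one]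
    exact ENNReal.ofReal_lt_ofReal_iff zero_lt_one |>.2
      (Real.exp_lt_one_iff.2 (by linarith))

lemma expNeg_add (a b : ℝ≥0∞) : expNeg (a + b) = expNeg a * expNeg b := by
  rcases eq_or_ne a ⊤ with rfl | ha
  · simp [expNeg_top, expNeg]
  rcases eq_or_ne b ⊤ with rfl | hb
  · simp [expNeg_top, expNeg]
  have hab : a + b ≠ ⊤ := ENNReal.add_ne_top.2 ⟨ha, hb⟩
  rw [expNeg, expNeg, expNeg, if_neg ha, if_neg hb, if_neg hab,
    ← ENNReal.ofReal_mul (Real.exp_nonneg _), ← Real.exp_add, ENNReal.toReal_add ha hb]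
  ring_nf

lemma expNeg_anti : Antitone expNeg := by
  intro a b hab
  rcases eq_or_ne b ⊤ with rfl | hb
  · simp [expNeg_top]
  have ha : a ≠ ⊤ := fun h => hb (top_le_iff.1 (h ▸ hab))
  rw [expNeg, expNeg, if_neg ha, if_neg hb]
  exact ENNReal.ofReal_le_ofReal (Real.exp_le_exp.2 (by
    have := ENNReal.toReal_mono hb hab
    linarith))

lemma expNeg_sum {ι : Type*} (s : Finset ι) (f : ι → ℝ≥0∞) :
    expNeg (∑ i ∈ s, f i) = ∏ i ∈ s, expNeg (f i) := by
  classical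
  induction s using Finset.induction_on with
  | empty => simp [expNeg_zero]
  | insert _ _ hi ih =>
    rw [Finset.sum_insert hi, Finset.prod_insert hi, expNeg_add, ih]

lemma continuous_expNeg : Continuous expNeg := by
  rw [continuous_iff_continuousAt]
  intro x
  rcases eq_or_ne x ⊤ with rfl | hx
  · rw [ContinuousAt, expNeg_top, ENNReal.tendsto_nhds_zero]
    intro ε hε
    rcases le_or_gt 1 ε with hε1 | hε1
    · exact Filter.Eventually.of_forall fun t => le_trans expNeg_le_one hε1
    have hεtop : ε ≠ ⊤ := (hε1.trans ENNReal.one_lt_top).ne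
    have hεr : 0 < ε.toReal := ENNReal.toReal_pos hε.ne' hεtop
    set M : ℝ := -Real.log ε.toReal with hM
    have hmem : Set.Ioi (ENNReal.ofReal M) ∈ nhds (⊤ : ℝ≥0∞) :=
      Ioi_mem_nhds (ENNReal.ofReal_lt_top)
    refine Filter.eventually_of_mem hmem fun t ht => ?_
    rcases eq_or_ne t ⊤ with rfl | htop
    · simp [expNeg_top]
    have h1 : M ≤ t.toReal :=
      (ENNReal.ofReal_le_iff_le_toReal htop).1 (le_of_lt ht)
    rw [expNeg, if_neg htop]
    calc ENNReal.ofReal (Real.exp (-t.toReal)) ≤ ENNReal.ofReal (Real.exp (-M)) :=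
          ENNReal.ofReal_le_ofReal (Real.exp_le_exp.2 (by linarith))
      _ = ε := by
          rw [hM, neg_neg, Real.exp_log hεr, ENNReal.ofReal_toReal hεtop]
  · have hg : ContinuousAt (fun t : ℝ≥0∞ => ENNReal.ofReal (Real.exp (-t.toReal))) x := by
      exact ENNReal.continuous_ofReal.continuousAt.comp
        ((Real.continuous_exp.continuousAt).comp
          ((continuous_neg.continuousAt).comp (ENNReal.tendsto_toReal hx)))
    refine hg.congr ?_
    filter_upwards [compl_singleton_mem_nhds hx] with t ht
    simp only [Set.mem_compl_iff, Set.mem_singleton_iff] at ht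
    rw [expNeg, if_neg ht]

lemma measurable_expNeg : Measurable expNeg := continuous_expNeg.measurable

lemma tsum_expNeg_poisson (r : NNReal) (c : ℝ≥0∞) :
    ∑' n : ℕ, expNeg (c * n) * poissonPMF r n = expNeg ((1 - expNeg c) * r) := by
  have hpmf : ∀ n : ℕ, poissonPMF r n = ENNReal.ofReal (poissonPMFReal r n) := fun n => rfl
  rcases eq_or_ne c ⊤ with rfl | hc
  · rw [tsum_eq_single 0 ?_]
    · have h0 : (⊤ : ℝ≥0∞) * (0 : ℕ) = 0 := by simp
      rw [h0, expNeg_zero, one_mul, hpmf, expNeg_top, tsub_zero, one_mul]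
      simp only [poissonPMFReal, pow_zero, Nat.factorial_zero, Nat.cast_one, mul_one, div_one]
      rw [expNeg, if_neg ENNReal.coe_ne_top]
      simp
    · intro n hn
      have : (⊤ : ℝ≥0∞) * (n : ℝ≥0∞) = ⊤ :=
        ENNReal.top_mul (by exact_mod_cast hn)
      rw [this, expNeg_top, zero_mul]
  · set a : ℝ := Real.exp (-c.toReal) with ha
    have ha0 : 0 < a := Real.exp_pos _
    have h1 : ∀ n : ℕ, expNeg (c * n) * poissonPMF r n
        = ENNReal.ofReal (Real.exp (-(r : ℝ)) * (((r : ℝ) * a) ^ n / n.factorial)) := by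
      intro n
      have hcn : c * (n : ℝ≥0∞) ≠ ⊤ := ENNReal.mul_ne_top hc (by simp)
      rw [expNeg, if_neg hcn, hpmf, ← ENNReal.ofReal_mul (Real.exp_nonneg _)]
      congr 1
      have htr : (c * (n : ℝ≥0∞)).toReal = c.toReal * n := by
        rw [ENNReal.toReal_mul]; simp
      rw [htr, poissonPMFReal]
      have : Real.exp (-(c.toReal * n)) = a ^ n := by
        rw [ha, ← Real.exp_nat_mul]; ring_nf
      rw [this, mul_pow]
      ring
    rw [tsum_congr h1, ← ENNReal.ofReal_tsum_of_nonneg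
      (fun n => mul_nonneg (Real.exp_nonneg _)
        (div_nonneg (pow_nonneg (mul_nonneg r.coe_nonneg ha0.le) n) (Nat.cast_nonneg _)))
      (((Real.summable_pow_div_factorial ((r : ℝ) * a))).mul_left _)]
    have hsum : ∑' n : ℕ, Real.exp (-(r : ℝ)) * (((r : ℝ) * a) ^ n / n.factorial)
        = Real.exp (-(r : ℝ)) * Real.exp ((r : ℝ) * a) := by
      rw [tsum_mul_left]
      congr 1
      rw [Real.exp_eq_exp_ℝ, NormedSpace.exp_eq_tsum_div]
    rw [hsum, ← Real.exp_add]
    have harg : (1 - expNeg c) * (r : ℝ≥0∞) ≠ ⊤ :=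
      ENNReal.mul_ne_top (by
        exact ne_top_of_le_ne_top ENNReal.one_ne_top (tsub_le_self)) ENNReal.coe_ne_top
    rw [expNeg, if_neg harg]
    congr 1
    have htr2 : ((1 - expNeg c) * (r : ℝ≥0∞)).toReal = (1 - a) * r := by
      rw [ENNReal.toReal_mul, ENNReal.toReal_sub_of_le expNeg_le_one ENNReal.one_ne_top]
      rw [expNeg, if_neg hc]
      simp [ENNReal.toReal_ofReal (Real.exp_nonneg _), ha]
    rw [htr2]
    ring_nf

lemma lintegral_finset_prod_of_iIndepFun {Ω ι : Type*} [MeasurableSpace Ω] (Pr : Measure Ω)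
    [IsProbabilityMeasure Pr] (Y : ι → Ω → ℝ≥0∞) (hYm : ∀ i, Measurable (Y i))
    (hind : iIndepFun Y Pr) (s : Finset ι) :
    ∫⁻ ω, ∏ i ∈ s, Y i ω ∂Pr = ∏ i ∈ s, ∫⁻ ω, Y i ω ∂Pr := by
  classical
  induction s using Finset.induction_on with
  | empty => simp
  | @insert i s hi ih =>
    have hIndep : IndepFun (∏ j ∈ s, Y j) (Y i) Pr :=
      hind.indepFun_finsetProd_of_notMem hYm hi
    have hm : Measurable (∏ j ∈ s, Y j) := by
      have : (∏ j ∈ s, Y j) = fun ω => ∏ j ∈ s, Y j ω := by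
        funext ω; simp [Finset.prod_apply]
      rw [this]
      exact Finset.measurable_prod s fun j _ => hYm j
    have key := lintegral_mul_eq_lintegral_mul_lintegral_of_indepFun (hYm i) hm hIndep.symm
    simp only [Pi.mul_apply, Finset.prod_apply] at key
    simp only [Finset.prod_insert hi]
    rw [key, ih]

lemma lintegral_expNeg_mul_poissonPP {Ω D : Type*} [MeasurableSpace Ω] [MeasurableSpace D]
    (Pr : Measure Ω) [IsProbabilityMeasure Pr]
    (P : Ω → Measure D) (lam : Measure D) (h : IsPoissonPP Pr P lam)
    {B : Set D} (hB : MeasurableSet B) (c : ℝ≥0∞) :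
    ∫⁻ ω, expNeg (c * P ω B) ∂Pr = expNeg ((1 - expNeg c) * lam B) := by
  rcases eq_or_ne c 0 with rfl | hc0
  · simp [expNeg_zero, measure_univ]
  rcases eq_or_ne (lam B) ⊤ with htop | hfin
  · have hae := h.2.2.2.1 B hB htop
    have hz : ∫⁻ ω, expNeg (c * P ω B) ∂Pr = ∫⁻ _, (0 : ℝ≥0∞) ∂Pr := by
      apply lintegral_congr_ae
      filter_upwards [hae] with ω hω
      simp [hω, ENNReal.mul_top hc0, expNeg_top]
    have hne : (1 - expNeg c) ≠ 0 :=
      (tsub_pos_of_lt (expNeg_lt_one hc0)).ne'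
    rw [hz, lintegral_zero, htop, ENNReal.mul_top hne, expNeg_top]
  · have hmap := h.2.2.1 B hB hfin
    set r := (lam B).toNNReal with hrdef
    have hr : (r : ℝ≥0∞) = lam B := ENNReal.coe_toNNReal hfin
    have hPB : Measurable fun ω => P ω B := (Measure.measurable_coe hB).comp h.1
    have hg : Measurable fun v : ℝ≥0∞ => expNeg (c * v) :=
      measurable_expNeg.comp (measurable_id.const_mul c)
    have hcoe : Measurable fun n : ℕ => (n : ℝ≥0∞) := measurable_from_top
    calc ∫⁻ ω, expNeg (c * P ω B) ∂Pr
        = ∫⁻ v, expNeg (c * v) ∂(Measure.map (fun ω => P ω B) Pr) :=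
          (lintegral_map hg hPB).symm
      _ = ∫⁻ v, expNeg (c * v)
            ∂(Measure.map (fun n : ℕ => (n : ℝ≥0∞)) ((poissonPMF r).toMeasure)) := by
          rw [hmap]
      _ = ∫⁻ n : ℕ, expNeg (c * n) ∂((poissonPMF r).toMeasure) := lintegral_map hg hcoe
      _ = ∑' n : ℕ, expNeg (c * n) * (poissonPMF r) n := by
          rw [lintegral_countable' (fun n : ℕ => expNeg (c * n))]
          exact tsum_congr fun n => by
            rw [PMF.toMeasure_apply_singleton _ _ (measurableSet_singleton n)]
      _ = expNeg ((1 - expNeg c) * r) := tsum_expNeg_poisson r c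
      _ = expNeg ((1 - expNeg c) * lam B) := by rw [hr]

lemma simpleFunc_laplace {Ω D : Type*} [MeasurableSpace Ω] [MeasurableSpace D]
    (Pr : Measure Ω) [IsProbabilityMeasure Pr]
    (P : Ω → Measure D) (lam : Measure D) (h : IsPoissonPP Pr P lam)
    (f : SimpleFunc D ℝ≥0∞) :
    ∫⁻ ω, expNeg (∫⁻ x, f x ∂(P ω)) ∂Pr =
      expNeg (∫⁻ x, (1 - expNeg (f x)) ∂lam) := by
  classical
  set m := f.range.card with hm
  set e : Fin m ≃ {y // y ∈ f.range} := f.range.equivFin.symm with he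
  set c : Fin m → ℝ≥0∞ := fun i => (e i : ℝ≥0∞) with hc
  set B : Fin m → Set D := fun i => f ⁻¹' {c i} with hBdef
  have hBmeas : ∀ i, MeasurableSet (B i) := fun i => f.measurableSet_fiber (c i)
  have hcinj : Function.Injective c := fun i j hij => by
    apply e.injective
    exact Subtype.ext hij
  have hdisj : Pairwise (Function.onFun Disjoint B) := by
    intro i j hij
    refine Set.disjoint_left.2 fun x hxi hxj => ?_
    exact hij (hcinj (by
      simp only [hBdef, Set.mem_preimage, Set.mem_singleton_iff] at hxi hxj
      rw [← hxi, ← hxj]))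
  -- LHS rewrite
  have hLHS : ∀ ω, expNeg (∫⁻ x, f x ∂(P ω)) = ∏ i : Fin m, expNeg (c i * P ω (B i)) := by
    intro ω
    rw [f.lintegral_eq_lintegral (P ω)]
    unfold SimpleFunc.lintegral
    rw [expNeg_sum]
    rw [← Finset.prod_coe_sort f.range (fun y => expNeg (y * P ω (f ⁻¹' {y})))]
    exact (Equiv.prod_comp e (fun y : {y // y ∈ f.range} =>
      expNeg ((y : ℝ≥0∞) * P ω (f ⁻¹' {(y : ℝ≥0∞)})))).symm
  -- RHS rewrite
  have hRHS : ∫⁻ x, (1 - expNeg (f x)) ∂lam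
      = ∑ i : Fin m, (1 - expNeg (c i)) * lam (B i) := by
    have hmapf : ∫⁻ x, (1 - expNeg (f x)) ∂lam
        = ∫⁻ x, (f.map (fun y => 1 - expNeg y)) x ∂lam := by
      apply lintegral_congr
      intro x
      simp [SimpleFunc.coe_map, Function.comp]
    rw [hmapf, SimpleFunc.lintegral_eq_lintegral, SimpleFunc.map_lintegral]
    rw [← Finset.sum_coe_sort f.range (fun y => (1 - expNeg y) * lam (f ⁻¹' {y}))]
    exact (Equiv.sum_comp e (fun y : {y // y ∈ f.range} =>
      (1 - expNeg (y : ℝ≥0∞)) * lam (f ⁻¹' {(y : ℝ≥0∞)}))).symm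
  -- independence
  have hind := h.2.2.2.2 m B hBmeas hdisj
  have hY : iIndepFun
      (fun i ω => expNeg (c i * P ω (B i))) Pr :=
    hind.comp (fun i v => expNeg (c i * v))
      (fun i => measurable_expNeg.comp (measurable_id.const_mul (c i)))
  have hYm : ∀ i, Measurable fun ω => expNeg (c i * P ω (B i)) := fun i =>
    measurable_expNeg.comp ((measurable_id.const_mul (c i)).comp
      ((Measure.measurable_coe (hBmeas i)).comp h.1))
  calc ∫⁻ ω, expNeg (∫⁻ x, f x ∂(P ω)) ∂Pr
      = ∫⁻ ω, ∏ i : Fin m, expNeg (c i * P ω (B i)) ∂Pr :=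
        lintegral_congr hLHS
    _ = ∏ i : Fin m, ∫⁻ ω, expNeg (c i * P ω (B i)) ∂Pr :=
        lintegral_finset_prod_of_iIndepFun Pr _ hYm hY Finset.univ
    _ = ∏ i : Fin m, expNeg ((1 - expNeg (c i)) * lam (B i)) :=
        Finset.prod_congr rfl fun i _ =>
          lintegral_expNeg_mul_poissonPP Pr P lam h (hBmeas i) (c i)
    _ = expNeg (∑ i : Fin m, (1 - expNeg (c i)) * lam (B i)) :=
        (expNeg_sum Finset.univ _).symm
    _ = expNeg (∫⁻ x, (1 - expNeg (f x)) ∂lam) := by rw [hRHS]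

/-- The Laplace functional of a Poisson point process with s-finite intensity `lam`:
`E[exp(-∫ u dP)] = exp(-∫ (1 - e^{-u(x)}) lam(dx))` for every measurable `u : D → [0,∞]`. -/
theorem poissonPP_laplace_functional {Ω D : Type*} [MeasurableSpace Ω] [MeasurableSpace D]
    (Pr : Measure Ω) [IsProbabilityMeasure Pr]
    (P : Ω → Measure D) (lam : Measure D) [SFinite lam]
    (h : IsPoissonPP Pr P lam) (u : D → ℝ≥0∞) (hu : Measurable u) :
    ∫⁻ ω, expNeg (∫⁻ x, u x ∂(P ω)) ∂Pr =
      expNeg (∫⁻ x, (1 - expNeg (u x)) ∂lam) := by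
  set v : ℕ → SimpleFunc D ℝ≥0∞ := SimpleFunc.eapprox u with hv
  have hvm : ∀ n, Measurable (v n) := fun n => (v n).measurable
  have hvmono : ∀ x : D, Monotone fun n => v n x :=
    fun x a b hab => SimpleFunc.monotone_eapprox u hab x
  have hvsup : ∀ x, (⨆ n, v n x) = u x := fun x => SimpleFunc.iSup_eapprox_apply hu x
  have hFmeas : ∀ n, Measurable fun ω => expNeg (∫⁻ x, v n x ∂(P ω)) := fun n =>
    measurable_expNeg.comp ((Measure.measurable_lintegral (hvm n)).comp h.1)
  -- LHS convergence
  have hL : Filter.Tendsto (fun n => ∫⁻ ω, expNeg (∫⁻ x, v n x ∂(P ω)) ∂Pr)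
      Filter.atTop (nhds (∫⁻ ω, expNeg (∫⁻ x, u x ∂(P ω)) ∂Pr)) := by
    refine tendsto_lintegral_of_dominated_convergence (fun _ => 1) hFmeas
      (fun n => Filter.Eventually.of_forall fun ω => expNeg_le_one) ?_
      (Filter.Eventually.of_forall fun ω => ?_)
    · simp [measure_univ]
    · have hmono : Monotone fun n => ∫⁻ x, v n x ∂(P ω) :=
        fun a b hab => lintegral_mono fun x => hvmono x hab
      have hsup : (⨆ n, ∫⁻ x, v n x ∂(P ω)) = ∫⁻ x, u x ∂(P ω) := by
        rw [← lintegral_iSup hvm fun a b hab x => hvmono x hab]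
        exact lintegral_congr fun x => hvsup x
      exact (continuous_expNeg.tendsto _).comp (hsup ▸ tendsto_atTop_iSup hmono)
  -- RHS convergence
  have hR : Filter.Tendsto (fun n => ∫⁻ ω, expNeg (∫⁻ x, v n x ∂(P ω)) ∂Pr)
      Filter.atTop (nhds (expNeg (∫⁻ x, (1 - expNeg (u x)) ∂lam))) := by
    have heq : (fun n => ∫⁻ ω, expNeg (∫⁻ x, v n x ∂(P ω)) ∂Pr)
        = fun n => expNeg (∫⁻ x, (1 - expNeg (v n x)) ∂lam) := by
      funext n
      exact simpleFunc_laplace Pr P lam h (v n)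
    rw [heq]
    refine (continuous_expNeg.tendsto _).comp ?_
    have hgm : ∀ n, Measurable fun x => 1 - expNeg (v n x) := fun n =>
      measurable_const.sub (measurable_expNeg.comp (hvm n))
    have hgmono : ∀ x : D, Monotone fun n => 1 - expNeg (v n x) :=
      fun x a b hab => tsub_le_tsub_left (expNeg_anti (hvmono x hab)) 1
    have hmono : Monotone fun n => ∫⁻ x, (1 - expNeg (v n x)) ∂lam :=
      fun a b hab => lintegral_mono fun x => hgmono x hab
    have hsup : (⨆ n, ∫⁻ x, (1 - expNeg (v n x)) ∂lam)
        = ∫⁻ x, (1 - expNeg (u x)) ∂lam := by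
      rw [← lintegral_iSup hgm fun a b hab x => hgmono x hab]
      refine lintegral_congr fun x => ?_
      have h1 : Filter.Tendsto (fun n => v n x) Filter.atTop (nhds (u x)) :=
        hvsup x ▸ tendsto_atTop_iSup (hvmono x)
      have h2 : Filter.Tendsto (fun n => 1 - expNeg (v n x)) Filter.atTop
          (nhds (1 - expNeg (u x))) :=
        ((ENNReal.continuous_sub_left ENNReal.one_ne_top).tendsto _).comp
          ((continuous_expNeg.tendsto _).comp h1)
      exact tendsto_nhds_unique (tendsto_atTop_iSup (hgmono x)) h2
    exact hsup ▸ tendsto_atTop_iSup hmono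
  exact tendsto_nhds_unique hL hR
end

section
/- Let P be a Poisson point process on D with s-finite intensity λ, and let D₁, D₂ ∈ 𝒟 be disjoint. Then the restrictions P ∩ D₁ and P ∩ D₂ are independent point processes. -/
open MeasureTheory ProbabilityTheory ENNReal

section Aux

variable {Ω D : Type*} [MeasurableSpace Ω] [MeasurableSpace D]

attribute [local instance] Classical.propDecidable

set_option linter.unusedSectionVars false

/-- Monotonicity of independence of σ-algebras. -/
lemma pp_indep_mono {m₁ m₂ m₁' m₂' _mΩ : MeasurableSpace Ω} {Pr : Measure Ω}
    (h : @ProbabilityTheory.Indep Ω m₁ m₂ _mΩ Pr)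
    (h₁ : m₁' ≤ m₁) (h₂ : m₂' ≤ m₂) : @ProbabilityTheory.Indep Ω m₁' m₂' _mΩ Pr := by
  rw [ProbabilityTheory.Indep_iff] at h ⊢
  exact fun t1 t2 ht1 ht2 => h t1 t2 (h₁ _ ht1) (h₂ _ ht2)

/-- The atom of a finite family of sets relative to a base set, indexed by a Boolean pattern. -/
def ppAtom (Dk : Set D) (F : Finset (Set D)) (c : {x // x ∈ F} → Bool) : Set D :=
  Dk ∩ ⋂ i : {x // x ∈ F}, cond (c i) i.1 i.1ᶜ

lemma ppAtom_subset (Dk : Set D) (F : Finset (Set D)) (c : {x // x ∈ F} → Bool) :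
    ppAtom Dk F c ⊆ Dk :=
  Set.inter_subset_left

lemma ppAtom_measurable {Dk : Set D} (hDk : MeasurableSet Dk) {F : Finset (Set D)}
    (hF : ∀ x ∈ F, MeasurableSet x) (c : {x // x ∈ F} → Bool) :
    MeasurableSet (ppAtom Dk F c) := by
  refine hDk.inter (MeasurableSet.iInter fun i => ?_)
  cases hc : c i
  · simp only [hc, Bool.cond_false]
    exact (hF i.1 i.2).compl
  · simp only [hc, Bool.cond_true]
    exact hF i.1 i.2

lemma ppAtom_disjoint {Dk : Set D} {F : Finset (Set D)} {c c' : {x // x ∈ F} → Bool}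
    (h : c ≠ c') : Disjoint (ppAtom Dk F c) (ppAtom Dk F c') := by
  obtain ⟨i, hi⟩ := Function.ne_iff.mp h
  rw [Set.disjoint_left]
  rintro y ⟨-, hy⟩ ⟨-, hy'⟩
  have h1 := Set.mem_iInter.mp hy i
  have h2 := Set.mem_iInter.mp hy' i
  cases hc : c i <;> cases hc' : c' i <;> simp_all

lemma ppAtom_decomp (Dk : Set D) {F : Finset (Set D)} {x : Set D} (hx : x ∈ F) :
    x ∩ Dk = ⋃ c ∈ Finset.univ.filter (fun c : {x // x ∈ F} → Bool => c ⟨x, hx⟩ = true),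
      ppAtom Dk F c := by
  classical
  ext y
  simp only [Set.mem_iUnion, Finset.mem_filter, Finset.mem_univ, true_and, Set.mem_inter_iff,
    ppAtom, Set.mem_iInter, exists_prop]
  constructor
  · rintro ⟨hyx, hyD⟩
    refine ⟨fun i => decide (y ∈ i.1), by simp [hyx], hyD, fun i => ?_⟩
    by_cases hyi : y ∈ i.1 <;> simp [hyi]
  · rintro ⟨c, hcx, hyD, hmem⟩
    have := hmem ⟨x, hx⟩
    rw [hcx] at this
    exact ⟨this, hyD⟩

lemma pp_count_eq_sum (P : Ω → Measure D)
    {Dk : Set D} (hDk : MeasurableSet Dk) {F : Finset (Set D)}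
    (hF : ∀ x ∈ F, MeasurableSet x) {x : Set D} (hx : x ∈ F) (ω : Ω) :
    P ω (x ∩ Dk) = ∑ c ∈ Finset.univ.filter (fun c : {x // x ∈ F} → Bool => c ⟨x, hx⟩ = true),
      P ω (ppAtom Dk F c) := by
  classical
  rw [ppAtom_decomp Dk hx]
  exact measure_biUnion_finset (fun c _ c' _ hne => ppAtom_disjoint hne)
    (fun c _ => ppAtom_measurable hDk hF c)

lemma pp_side_measurable {P : Ω → Measure D}
    {Dk : Set D} (hDk : MeasurableSet Dk) {F : Finset (Set D)}
    (hF : ∀ x ∈ F, MeasurableSet x) {f : Set D → Set Ω}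
    (hf : ∀ x ∈ F, MeasurableSet[MeasurableSpace.comap (fun ω => P ω (x ∩ Dk)) inferInstance]
      (f x)) :
    MeasurableSet[⨆ c : {x // x ∈ F} → Bool,
        MeasurableSpace.comap (fun ω => P ω (ppAtom Dk F c)) inferInstance]
      (⋂ x ∈ F, f x) := by
  classical
  refine Finset.measurableSet_biInter _ fun x hx => ?_
  obtain ⟨E, hE, hfx⟩ := hf x hx
  have hcnt : Measurable[⨆ c : {x // x ∈ F} → Bool,
      MeasurableSpace.comap (fun ω => P ω (ppAtom Dk F c)) inferInstance]
      (fun ω => P ω (x ∩ Dk)) := by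
    have heq : (fun ω => P ω (x ∩ Dk)) = fun ω =>
        ∑ c ∈ Finset.univ.filter (fun c : {x // x ∈ F} → Bool => c ⟨x, hx⟩ = true),
          P ω (ppAtom Dk F c) := by
      funext ω; exact pp_count_eq_sum P hDk hF hx ω
    rw [heq]
    exact Finset.measurable_sum _ fun c _ => Measurable.of_comap_le (le_iSup (fun c : {x // x ∈ F} → Bool =>
      MeasurableSpace.comap (fun ω => P ω (ppAtom Dk F c)) inferInstance) c)
  exact hfx ▸ hcnt hE

end Aux

/-- The restrictions of a Poisson point process with s-finite intensity to two disjoint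
measurable sets are independent (as random measures). -/
theorem poissonPP_disjoint_restrictions_indep {Ω D : Type*}
    [MeasurableSpace Ω] [MeasurableSpace D]
    (Pr : Measure Ω) [IsProbabilityMeasure Pr]
    (P : Ω → Measure D) (lam : Measure D) [SFinite lam]
    (h : IsPoissonPP Pr P lam)
    (D₁ D₂ : Set D) (h₁ : MeasurableSet D₁) (h₂ : MeasurableSet D₂)
    (hdisj : Disjoint D₁ D₂) :
    IndepFun (fun ω => (P ω).restrict D₁) (fun ω => (P ω).restrict D₂) Pr := by
  classical
  obtain ⟨hPmeas, -, -, -, hIndepF⟩ := h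
  have hcm : ∀ B : Set D, MeasurableSet B → Measurable (fun ω => P ω B) :=
    fun B hB => (Measure.measurable_coe hB).comp hPmeas
  have key : ProbabilityTheory.Indep
      (⨆ s ∈ {s : Set D | MeasurableSet s},
        MeasurableSpace.comap (fun ω => P ω (s ∩ D₁)) inferInstance)
      (⨆ s ∈ {s : Set D | MeasurableSet s},
        MeasurableSpace.comap (fun ω => P ω (s ∩ D₂)) inferInstance) Pr := by
    refine ProbabilityTheory.IndepSets.indep
      (iSup₂_le fun s hs => (hcm _ (hs.inter h₁)).comap_le)
      (iSup₂_le fun s hs => (hcm _ (hs.inter h₂)).comap_le)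
      (isPiSystem_piiUnionInter _
        (fun n => @MeasurableSpace.isPiSystem_measurableSet Ω
          (MeasurableSpace.comap (fun ω => P ω (n ∩ D₁)) inferInstance)) _)
      (isPiSystem_piiUnionInter _
        (fun n => @MeasurableSpace.isPiSystem_measurableSet Ω
          (MeasurableSpace.comap (fun ω => P ω (n ∩ D₂)) inferInstance)) _)
      (generateFrom_piiUnionInter_measurableSet _ _).symm
      (generateFrom_piiUnionInter_measurableSet _ _).symm ?_
    rw [ProbabilityTheory.IndepSets_iff]
    rintro A B ⟨F, hFS, f, hfm, rfl⟩ ⟨G, hGS, g, hgm, rfl⟩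
    have hFm : ∀ x ∈ F, MeasurableSet x := fun x hx => hFS hx
    have hGm : ∀ x ∈ G, MeasurableSet x := fun x hx => hGS hx
    set ι := ({x // x ∈ F} → Bool) ⊕ ({x // x ∈ G} → Bool) with hι
    set atom : ι → Set D := Sum.elim (ppAtom D₁ F) (ppAtom D₂ G) with hatom
    have hatomM : ∀ i, MeasurableSet (atom i) := by
      rintro (c | c)
      · exact ppAtom_measurable h₁ hFm c
      · exact ppAtom_measurable h₂ hGm c
    have hatomD : Pairwise (Function.onFun Disjoint atom) := by
      rintro (c | c) (c' | c') hne
      · exact ppAtom_disjoint (fun hcc => hne (by rw [hcc]))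
      · exact hdisj.mono (ppAtom_subset _ _ _) (ppAtom_subset _ _ _)
      · exact hdisj.symm.mono (ppAtom_subset _ _ _) (ppAtom_subset _ _ _)
      · exact ppAtom_disjoint (fun hcc => hne (by rw [hcc]))
    set e : Fin (Fintype.card ι) ≃ ι := (Fintype.equivFin ι).symm with he
    have hind : ProbabilityTheory.iIndep
        (fun i => MeasurableSpace.comap (fun ω => P ω (atom (e i))) inferInstance) Pr :=
      (hIndepF _ (fun i => atom (e i)) (fun i => hatomM _)
        (fun i j hij => hatomD (e.injective.ne hij))).iIndep
    set S : Set (Fin (Fintype.card ι)) := {i | ∃ c, e i = Sum.inl c} with hS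
    set T : Set (Fin (Fintype.card ι)) := {i | ∃ c, e i = Sum.inr c} with hT
    have hST : Disjoint S T := by
      rw [Set.disjoint_left]
      rintro i ⟨c, hc⟩ ⟨c', hc'⟩
      rw [hc] at hc'
      exact Sum.inl_ne_inr hc'
    have hkey := ProbabilityTheory.indep_iSup_of_disjoint
      (fun i => (hcm _ (hatomM _)).comap_le) hind hST
    rw [ProbabilityTheory.Indep_iff] at hkey
    refine hkey _ _ ?_ ?_
    · have hA := pp_side_measurable (P := P) h₁ hFm hfm
      have hle : (⨆ c : {x // x ∈ F} → Bool,
          MeasurableSpace.comap (fun ω => P ω (ppAtom D₁ F c)) inferInstance) ≤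
          ⨆ i ∈ S, MeasurableSpace.comap (fun ω => P ω (atom (e i))) inferInstance := by
        refine iSup_le fun c => ?_
        have hmem : e.symm (Sum.inl c) ∈ S := ⟨c, e.apply_symm_apply _⟩
        have h1 : atom (e (e.symm (Sum.inl c))) = ppAtom D₁ F c := by
          rw [e.apply_symm_apply]; simp [hatom]
        calc MeasurableSpace.comap (fun ω => P ω (ppAtom D₁ F c)) inferInstance
            = MeasurableSpace.comap (fun ω => P ω (atom (e (e.symm (Sum.inl c)))))
              inferInstance := by rw [h1]
          _ ≤ _ := le_biSup
              (fun i => MeasurableSpace.comap (fun ω => P ω (atom (e i))) inferInstance) hmem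
      exact hle _ hA
    · have hB := pp_side_measurable (P := P) h₂ hGm hgm
      have hle : (⨆ c : {x // x ∈ G} → Bool,
          MeasurableSpace.comap (fun ω => P ω (ppAtom D₂ G c)) inferInstance) ≤
          ⨆ i ∈ T, MeasurableSpace.comap (fun ω => P ω (atom (e i))) inferInstance := by
        refine iSup_le fun c => ?_
        have hmem : e.symm (Sum.inr c) ∈ T := ⟨c, e.apply_symm_apply _⟩
        have h1 : atom (e (e.symm (Sum.inr c))) = ppAtom D₂ G c := by
          rw [e.apply_symm_apply]; simp [hatom]
        calc MeasurableSpace.comap (fun ω => P ω (ppAtom D₂ G c)) inferInstance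
            = MeasurableSpace.comap (fun ω => P ω (atom (e (e.symm (Sum.inr c)))))
              inferInstance := by rw [h1]
          _ ≤ _ := le_biSup
              (fun i => MeasurableSpace.comap (fun ω => P ω (atom (e i))) inferInstance) hmem
      exact hle _ hB
  rw [ProbabilityTheory.IndepFun_iff_Indep]
  have hle1 : MeasurableSpace.comap (fun ω => (P ω).restrict D₁) inferInstance ≤
      ⨆ s ∈ {s : Set D | MeasurableSet s},
        MeasurableSpace.comap (fun ω => P ω (s ∩ D₁)) inferInstance := by
    have hm : Measurable[⨆ s ∈ {s : Set D | MeasurableSet s},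
        MeasurableSpace.comap (fun ω => P ω (s ∩ D₁)) inferInstance]
        (fun ω => (P ω).restrict D₁) := by
      refine @Measure.measurable_of_measurable_coe D Ω _
        (⨆ s ∈ {s : Set D | MeasurableSet s},
          MeasurableSpace.comap (fun ω => P ω (s ∩ D₁)) inferInstance) _ fun s hs => ?_
      have heq : (fun ω => (P ω).restrict D₁ s) = fun ω => P ω (s ∩ D₁) := by
        funext ω; exact Measure.restrict_apply hs
      rw [heq]
      exact Measurable.of_comap_le (le_biSup
        (fun s => MeasurableSpace.comap (fun ω => P ω (s ∩ D₁)) inferInstance) hs)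
    exact hm.comap_le
  have hle2 : MeasurableSpace.comap (fun ω => (P ω).restrict D₂) inferInstance ≤
      ⨆ s ∈ {s : Set D | MeasurableSet s},
        MeasurableSpace.comap (fun ω => P ω (s ∩ D₂)) inferInstance := by
    have hm : Measurable[⨆ s ∈ {s : Set D | MeasurableSet s},
        MeasurableSpace.comap (fun ω => P ω (s ∩ D₂)) inferInstance]
        (fun ω => (P ω).restrict D₂) := by
      refine @Measure.measurable_of_measurable_coe D Ω _
        (⨆ s ∈ {s : Set D | MeasurableSet s},
          MeasurableSpace.comap (fun ω => P ω (s ∩ D₂)) inferInstance) _ fun s hs => ?_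
      have heq : (fun ω => (P ω).restrict D₂ s) = fun ω => P ω (s ∩ D₂) := by
        funext ω; exact Measure.restrict_apply hs
      rw [heq]
      exact Measurable.of_comap_le (le_biSup
        (fun s => MeasurableSpace.comap (fun ω => P ω (s ∩ D₂)) inferInstance) hs)
    exact hm.comap_le
  exact pp_indep_mono key hle1 hle2
end
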